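/- Let u: ℤ² → ℝ satisfy: (i) D1u is constant equal to k1 (where D1u_{m,n} = u_{m+1,n} − u_{m,n}), and (ii) the circle packing angle-sum equation holds at every vertex of the hexagonal lattice with radii r_{m,n} = e^{u_{m,n}}. Then D2u (where D2u_{m,n} = u_{m,n+1} − u_{m,n}) is also constant, and hence u_{m,n} = u_{0,0} + k1·m + k2·n for constants k1, k2; i.e., the packing is a Doyle spiral. -/

import Mathlib

open Real EuclideanGeometry

/-- Inner angle at the vertex of radius `a` in the triangle with side lengths
`a+b, a+c, b+c` formed by three mutually externally tangent circles. -/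
noncomputable def ang (a b c : ℝ) : ℝ :=
  Real.arccos (((a + b) ^ 2 + (a + c) ^ 2 - (b + c) ^ 2) / (2 * (a + b) * (a + c)))

lemma ang_scale {t : ℝ} (ht : t ≠ 0) (a b c : ℝ) : ang (t*a) (t*b) (t*c) = ang a b c := by
  unfold ang
  congr 1
  rw [show ((t*a+t*b)^2+(t*a+t*c)^2-(t*b+t*c)^2) = t^2 * ((a+b)^2+(a+c)^2-(b+c)^2) by ring,
      show (2*(t*a+t*b)*(t*a+t*c)) = t^2 * (2*(a+b)*(a+c)) by ring,
      mul_div_mul_left _ _ (pow_ne_zero 2 ht)]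

lemma ang_comm (a b c : ℝ) : ang a b c = ang a c b := by
  unfold ang
  ring_nf

lemma ang_mono {a b b' c : ℝ} (ha : 0 < a) (hb : 0 < b) (hc : 0 < c) (hbb : b < b') :
    ang a b c < ang a b' c := by
  have hb' : 0 < b' := hb.trans hbb
  have hD : (0:ℝ) < 2*(a+b)*(a+c) := by positivity
  have hD' : (0:ℝ) < 2*(a+b')*(a+c) := by positivity
  have key : ((a+b')^2+(a+c)^2-(b'+c)^2) / (2*(a+b')*(a+c))
      < ((a+b)^2+(a+c)^2-(b+c)^2) / (2*(a+b)*(a+c)) := by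
    rw [div_lt_div_iff₀ hD' hD]
    nlinarith [mul_pos (mul_pos (mul_pos ha hc) (show (0:ℝ) < a+c by linarith))
      (sub_pos.mpr hbb)]
  have mem : ∀ x : ℝ, 0 < x → ((a+x)^2+(a+c)^2-(x+c)^2) / (2*(a+x)*(a+c)) ∈ Set.Icc (-1:ℝ) 1 := by
    intro x hx
    have hDx : (0:ℝ) < 2*(a+x)*(a+c) := by positivity
    constructor
    · rw [le_div_iff₀ hDx]; nlinarith [mul_pos ha (show (0:ℝ) < a+x+c by linarith)]
    · rw [div_le_one hDx]; nlinarith [mul_pos hx hc]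
  exact Real.strictAntiOn_arccos (mem b' hb') (mem b hb) key

lemma ang_mono' {a b c c' : ℝ} (ha : 0 < a) (hb : 0 < b) (hc : 0 < c) (hcc : c < c') :
    ang a b c < ang a b c' := by
  rw [ang_comm a b c, ang_comm a b c']
  exact ang_mono ha hc hb hcc

lemma ang_eq_angle {a b c : ℝ} (ha : 0 < a) (hb : 0 < b) (hc : 0 < c)
    (p1 p2 p3 : ℂ)
    (h12 : dist p2 p1 = a + b) (h13 : dist p3 p1 = a + c) (h23 : dist p2 p3 = b + c) :
    ang a b c = ∠ p2 p1 p3 := by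
  have hlaw := EuclideanGeometry.law_cos p2 p1 p3
  rw [h12, h23, h13] at hlaw
  have hab : (0:ℝ) < a + b := by linarith
  have hac : (0:ℝ) < a + c := by linarith
  have hcos : Real.cos (∠ p2 p1 p3) = ((a+b)^2+(a+c)^2-(b+c)^2) / (2*(a+b)*(a+c)) := by
    field_simp
    nlinarith [hlaw]
  unfold ang
  rw [← hcos, Real.arccos_cos (EuclideanGeometry.angle_nonneg _ _ _)
    (EuclideanGeometry.angle_le_pi _ _ _)]

lemma dist_pt (x1 y1 x2 y2 : ℝ) :
    dist ((x1:ℂ) + y1 * Complex.I) ((x2:ℂ) + y2 * Complex.I) = Real.sqrt ((x1-x2)^2 + (y1-y2)^2) := by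
  rw [Complex.dist_eq, show ((x1:ℂ) + y1 * Complex.I - ((x2:ℂ) + y2 * Complex.I)) =
    ((x1-x2:ℝ):ℂ) + ((y1-y2:ℝ):ℂ)*Complex.I by push_cast; ring, Complex.norm_add_mul_I]

lemma ang_sum {a b c : ℝ} (ha : 0 < a) (hb : 0 < b) (hc : 0 < c) :
    ang a b c + ang b c a + ang c a b = π := by
  set x0 : ℝ := ((a+b)^2+(a+c)^2-(b+c)^2)/(2*(a+b)) with hx0
  have hab : (0:ℝ) < a + b := by linarith
  have hy0sq : (a+c)^2 - x0^2 ≥ 0 := by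
    rw [hx0, div_pow, ge_iff_le, sub_nonneg, div_le_iff₀ (by positivity)]
    nlinarith [mul_pos (mul_pos (mul_pos ha hb) hc) (show (0:ℝ) < a+b+c by linarith)]
  set y0 : ℝ := Real.sqrt ((a+c)^2 - x0^2) with hy0
  have hy0sq' : y0^2 = (a+c)^2 - x0^2 := Real.sq_sqrt hy0sq
  set A : ℂ := (0:ℝ) + (0:ℝ) * Complex.I with hA
  set B : ℂ := ((a+b:ℝ):ℂ) + (0:ℝ) * Complex.I with hB
  set C : ℂ := (x0:ℂ) + y0 * Complex.I with hC
  have dAB : dist B A = a + b := by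
    rw [hB, hA, dist_pt, show (a+b-0)^2 + ((0:ℝ)-0)^2 = (a+b)^2 by ring, Real.sqrt_sq hab.le]
  have dAC : dist C A = a + c := by
    rw [hC, hA, dist_pt, show (x0-0)^2 + (y0-(0:ℝ))^2 = x0^2 + y0^2 by ring, hy0sq',
      show x0^2 + ((a+c)^2 - x0^2) = (a+c)^2 by ring, Real.sqrt_sq (by linarith)]
  have dBC : dist B C = b + c := by
    rw [hB, hC, dist_pt, show (a+b-x0)^2 + ((0:ℝ)-y0)^2 = (a+b)^2 - 2*(a+b)*x0 + x0^2 + y0^2 by ring,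
      hy0sq']
    rw [show (a+b)^2 - 2*(a+b)*x0 + x0^2 + ((a+c)^2 - x0^2) = (b+c)^2 by
      rw [hx0]; field_simp; ring, Real.sqrt_sq (by linarith)]
  have hBA : B ≠ A := by
    intro h; rw [h, dist_self] at dAB; linarith
  have hCA : C ≠ A := by
    intro h; rw [h, dist_self] at dAC; linarith
  have e1 : ang a b c = ∠ B A C := ang_eq_angle ha hb hc A B C dAB dAC dBC
  have e2 : ang b c a = ∠ C B A := by
    refine ang_eq_angle hb hc ha B C A ?_ ?_ ?_
    · rw [dist_comm, dBC]
    · rw [dist_comm, dAB]; ring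
    · rw [dAC]; ring
  have e3 : ang c a b = ∠ A C B := by
    refine ang_eq_angle hc ha hb C A B ?_ ?_ ?_
    · rw [dist_comm, dAC]; ring
    · rw [dBC]; ring
    · rw [dist_comm, dAB]
  rw [e1, e2, e3]
  have h5 := EuclideanGeometry.angle_add_angle_add_angle_eq_pi (p₁ := A) (p₂ := B) C hBA
  rw [EuclideanGeometry.angle_comm A B C, EuclideanGeometry.angle_comm B C A,
    EuclideanGeometry.angle_comm C A B] at h5
  linarith [h5]


lemma ang_exp (c p q : ℝ) : ang (exp c) (exp p) (exp q) = ang 1 (exp (p - c)) (exp (q - c)) := by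
  rw [← ang_scale (Real.exp_ne_zero c) 1 (exp (p-c)) (exp (q-c)), mul_one, ← Real.exp_add,
    ← Real.exp_add, show c + (p - c) = p by ring, show c + (q - c) = q by ring]

noncomputable def upS (k x : ℝ) : ℝ :=
  ang 1 (exp k) (exp x) + ang 1 (exp x) (exp (x - k)) + ang 1 (exp (x - k)) (exp (-k))

noncomputable def loS (k y : ℝ) : ℝ :=
  ang 1 (exp (-k)) (exp (-y)) + ang 1 (exp (-y)) (exp (k - y)) + ang 1 (exp (k - y)) (exp k)

lemma doyle (k x : ℝ) : upS k x + loS k x = 2 * π := by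
  have h1 : ang 1 (exp (x - k)) (exp (-k)) = ang (exp k) (exp x) 1 := by
    have h := ang_scale (Real.exp_ne_zero k) 1 (exp (x-k)) (exp (-k))
    rw [mul_one, ← Real.exp_add, ← Real.exp_add, show k + (x - k) = x by ring,
      show k + -k = 0 by ring, Real.exp_zero] at h
    exact h.symm
  have h2 : ang 1 (exp (-k)) (exp (-x)) = ang (exp x) (exp (x - k)) 1 := by
    have h := ang_scale (Real.exp_ne_zero x) 1 (exp (-k)) (exp (-x))
    rw [mul_one, ← Real.exp_add, ← Real.exp_add, show x + -k = x - k by ring,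
      show x + -x = 0 by ring, Real.exp_zero] at h
    exact h.symm
  have h3 : ang 1 (exp (-x)) (exp (k - x)) = ang (exp x) 1 (exp k) := by
    have h := ang_scale (Real.exp_ne_zero x) 1 (exp (-x)) (exp (k-x))
    rw [mul_one, ← Real.exp_add, ← Real.exp_add, show x + -x = 0 by ring,
      show x + (k - x) = k by ring, Real.exp_zero] at h
    exact h.symm
  have h4 : ang 1 (exp (k - x)) (exp k) = ang (exp (x - k)) 1 (exp x) := by
    have h := ang_scale (Real.exp_ne_zero (x - k)) 1 (exp (k-x)) (exp k)
    rw [mul_one, ← Real.exp_add, ← Real.exp_add, show x - k + (k - x) = 0 by ring,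
      show x - k + k = x by ring, Real.exp_zero] at h
    exact h.symm
  have s1 := ang_sum one_pos (Real.exp_pos k) (Real.exp_pos x)
  have s2 := ang_sum one_pos (Real.exp_pos x) (Real.exp_pos (x - k))
  unfold upS loS
  rw [h1, h2, h3, h4]
  linarith [s1, s2]

lemma loS_strictAnti (k : ℝ) : StrictAnti (loS k) := by
  intro y y' h
  have e1 : exp (-y') < exp (-y) := Real.exp_lt_exp.mpr (by linarith)
  have e2 : exp (k - y') < exp (k - y) := Real.exp_lt_exp.mpr (by linarith)
  have t1 : ang 1 (exp (-k)) (exp (-y')) < ang 1 (exp (-k)) (exp (-y)) :=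
    ang_mono' one_pos (Real.exp_pos _) (Real.exp_pos _) e1
  have t2 : ang 1 (exp (-y')) (exp (k - y')) < ang 1 (exp (-y)) (exp (k - y)) := by
    calc ang 1 (exp (-y')) (exp (k - y')) < ang 1 (exp (-y)) (exp (k - y')) :=
          ang_mono one_pos (Real.exp_pos _) (Real.exp_pos _) e1
      _ < ang 1 (exp (-y)) (exp (k - y)) :=
          ang_mono' one_pos (Real.exp_pos _) (Real.exp_pos _) e2
  have t3 : ang 1 (exp (k - y')) (exp k) < ang 1 (exp (k - y)) (exp k) :=
    ang_mono one_pos (Real.exp_pos _) (Real.exp_pos _) e2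
  unfold loS
  linarith

/-- The circle packing angle-sum condition at the vertex `(m,n)` of the hexagonal
lattice for radii `r`: the six inner angles at `(m,n)` in the six incident triangles
sum to `2π`. -/
noncomputable def packingEq (r : ℤ × ℤ → ℝ) (m n : ℤ) : Prop :=
  ang (r (m, n)) (r (m + 1, n)) (r (m, n + 1)) +
  ang (r (m, n)) (r (m, n + 1)) (r (m - 1, n + 1)) +
  ang (r (m, n)) (r (m - 1, n + 1)) (r (m - 1, n)) +
  ang (r (m, n)) (r (m - 1, n)) (r (m, n - 1)) +
  ang (r (m, n)) (r (m, n - 1)) (r (m + 1, n - 1)) +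
  ang (r (m, n)) (r (m + 1, n - 1)) (r (m + 1, n)) = 2 * Real.pi

/-- If the horizontal difference `D1 u` is constant and the angle-sum equation holds at
every vertex for radii `e^u`, then the vertical difference `D2 u` is also constant, so
`u` is linear and the packing is a Doyle spiral. -/
theorem stmt_15 (u : ℤ × ℤ → ℝ) (k1 : ℝ)
    (hD1 : ∀ m n : ℤ, u (m + 1, n) - u (m, n) = k1)
    (hpack : ∀ m n : ℤ, packingEq (fun v => Real.exp (u v)) m n) :
    ∃ k2 : ℝ, (∀ m n : ℤ, u (m, n + 1) - u (m, n) = k2) ∧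
      ∀ m n : ℤ, u (m, n) = u (0, 0) + k1 * m + k2 * n := by
  have hrow : ∀ m n : ℤ, u (m, n) = u (0, n) + k1 * m := by
    intro m n
    induction m using Int.induction_on with
    | zero => simp
    | succ i ih =>
        have h := hD1 i n
        push_cast at ih ⊢
        linarith
    | pred i ih =>
        have h := hD1 (-(i:ℤ) - 1) n
        rw [show (-(i:ℤ) - 1 + 1) = -(i:ℤ) by ring] at h
        push_cast at ih ⊢
        linarith
  have hstep : ∀ n : ℤ, u (0, n) - u (0, n - 1) = u (0, n + 1) - u (0, n) := by
    intro n
    have hp := hpack 0 n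
    unfold packingEq at hp
    simp only [ang_exp] at hp
    set x := u (0, n + 1) - u (0, n) with hx
    set y := u (0, n) - u (0, n - 1) with hy
    have d1 : u (0 + 1, n) - u (0, n) = k1 := hD1 0 n
    have d2 : u (0 - 1, n) - u (0, n) = -k1 := by
      have h := hD1 (0 - 1) n
      rw [show (0 - 1 + 1 : ℤ) = 0 by ring] at h
      linarith
    have d3 : u (0 - 1, n + 1) - u (0, n) = x - k1 := by
      have h := hD1 (0 - 1) (n + 1)
      rw [show (0 - 1 + 1 : ℤ) = 0 by ring] at h
      linarith [hx]
    have d4 : u (0 + 1, n - 1) - u (0, n) = k1 - y := by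
      have h := hD1 0 (n - 1)
      linarith [hy]
    have d5 : u (0, n - 1) - u (0, n) = -y := by linarith [hy]
    rw [d1, d2, d3, d4, d5] at hp
    have key : loS k1 y = loS k1 x := by
      have h2 := doyle k1 x
      unfold upS loS at h2
      unfold loS
      linarith [hp, h2]
    exact (loS_strictAnti k1).injective key
  have hcol : ∀ n : ℤ, u (0, n + 1) - u (0, n) = u (0, 1) - u (0, 0) := by
    intro n
    induction n using Int.induction_on with
    | zero => norm_num
    | succ i ih =>
        have h := hstep ((i:ℤ) + 1)
        rw [show ((i:ℤ) + 1 - 1) = (i:ℤ) by ring] at h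
        linarith
    | pred i ih =>
        have h := hstep (-(i:ℤ))
        rw [show (-(i:ℤ) - 1 + 1) = -(i:ℤ) by ring]
        linarith
  refine ⟨u (0, 1) - u (0, 0), fun m n => ?_, ?_⟩
  · rw [hrow m (n + 1), hrow m n]
    have h := hcol n
    linarith
  · intro m n
    have hc : ∀ n : ℤ, u (0, n) = u (0, 0) + (u (0, 1) - u (0, 0)) * n := by
      intro n
      induction n using Int.induction_on with
      | zero => simp
      | succ i ih =>
          have h := hcol i
          push_cast at ih ⊢
          linarith
      | pred i ih =>
          have h := hcol (-(i:ℤ) - 1)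
          rw [show (-(i:ℤ) - 1 + 1) = -(i:ℤ) by ring] at h
          push_cast at ih ⊢
          linarith
    rw [hrow m n, hc n]
    ring
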